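/- Let G and H be finite connected nontrivial simple graphs of order n₁ and n₂ respectively. Then dim_s(G ⊠ H) ≤ n₂ · dim_s(G) + n₁ · dim_s(H) − dim_s(G) · dim_s(H). -/

import Mathlib

open SimpleGraph Finset

variable {α β : Type*}

/-- The strong product of two simple graphs: distinct vertices `(a,b)` and `(c,d)` are adjacent
iff (`a = c` or `a ~ c`) and (`b = d` or `b ~ d`). -/
def strongProd (G : SimpleGraph α) (H : SimpleGraph β) : SimpleGraph (α × β) where
  Adj x y := x ≠ y ∧ (x.1 = y.1 ∨ G.Adj x.1 y.1) ∧ (x.2 = y.2 ∨ H.Adj x.2 y.2)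
  symm := ⟨by
    rintro x y ⟨h1, h2, h3⟩
    exact ⟨h1.symm, h2.imp Eq.symm (fun a => a.symm), h3.imp Eq.symm (fun a => a.symm)⟩⟩
  loopless := ⟨fun x h => h.1 rfl⟩

/-- The Cartesian sum (disjunctive product) of two simple graphs. -/
def cartSum (G : SimpleGraph α) (H : SimpleGraph β) : SimpleGraph (α × β) where
  Adj x y := x ≠ y ∧ (G.Adj x.1 y.1 ∨ H.Adj x.2 y.2)
  symm := ⟨by
    rintro x y ⟨h1, h2⟩
    exact ⟨h1.symm, h2.imp (fun a => a.symm) (fun a => a.symm)⟩⟩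
  loopless := ⟨fun x h => h.1 rfl⟩

/-- `u` is maximally distant from `v` in `G`. -/
def MaximallyDistantFrom (G : SimpleGraph α) (u v : α) : Prop :=
  ∀ w, G.Adj u w → G.dist v w ≤ G.dist u v

/-- `u` and `v` are mutually maximally distant in `G`. -/
def MutuallyMaximallyDistant (G : SimpleGraph α) (u v : α) : Prop :=
  MaximallyDistantFrom G u v ∧ MaximallyDistantFrom G v u

/-- The strong resolving graph of `G`. -/
def strongResolvingGraph (G : SimpleGraph α) : SimpleGraph α where
  Adj u v := u ≠ v ∧ MutuallyMaximallyDistant G u v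
  symm := ⟨by rintro u v ⟨h1, h2, h3⟩; exact ⟨h1.symm, h3, h2⟩⟩
  loopless := ⟨fun x h => h.1 rfl⟩

/-- A finset of vertices is independent if no two of its (distinct) members are adjacent. -/
def IsIndepFinset (G : SimpleGraph α) (s : Finset α) : Prop :=
  ∀ u ∈ s, ∀ v ∈ s, u ≠ v → ¬ G.Adj u v

/-- The independence number `β(G)`. -/
noncomputable def indepNum (G : SimpleGraph α) [Fintype α] : ℕ :=
  sSup {n | ∃ s : Finset α, IsIndepFinset G s ∧ s.card = n}

/-- `w` strongly resolves `u` and `v` in `G`. -/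
def StronglyResolves (G : SimpleGraph α) (w u v : α) : Prop :=
  G.dist w u = G.dist w v + G.dist v u ∨ G.dist w v = G.dist w u + G.dist u v

/-- A strong metric generator for `G`. -/
def IsStrongMetricGenerator (G : SimpleGraph α) (s : Finset α) : Prop :=
  ∀ u v : α, u ≠ v → ∃ w ∈ s, StronglyResolves G w u v

/-- The strong metric dimension of `G`. -/
noncomputable def sdim (G : SimpleGraph α) [Fintype α] : ℕ :=
  sInf {n | ∃ s : Finset α, IsStrongMetricGenerator G s ∧ s.card = n}

section Aux

variable {G : SimpleGraph α} {H : SimpleGraph β}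

/-- Combine walks in the factors into a walk in the strong product. -/
def combineWalk : ∀ {a c : α} {b d : β},
    G.Walk a c → H.Walk b d → (strongProd G H).Walk (a, b) (c, d)
  | _, _, _, _, .nil, .nil => .nil
  | a, _, b, d, .nil, @SimpleGraph.Walk.cons _ _ _ b' _ h q =>
      Walk.cons (u := (a, b)) (v := (a, b'))
        ⟨fun he => (H.ne_of_adj h) (congrArg Prod.snd he), Or.inl rfl, Or.inr h⟩
        (combineWalk Walk.nil q)
  | a, c, b, _, @SimpleGraph.Walk.cons _ _ _ a' _ h p, .nil =>
      Walk.cons (u := (a, b)) (v := (a', b))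
        ⟨fun he => (G.ne_of_adj h) (congrArg Prod.fst he), Or.inr h, Or.inl rfl⟩
        (combineWalk p Walk.nil)
  | a, c, b, d, @SimpleGraph.Walk.cons _ _ _ a' _ h p,
      @SimpleGraph.Walk.cons _ _ _ b' _ h' q =>
      Walk.cons (u := (a, b)) (v := (a', b'))
        ⟨fun he => (G.ne_of_adj h) (congrArg Prod.fst he), Or.inr h, Or.inr h'⟩
        (combineWalk p q)

lemma combineWalk_length : ∀ {a c : α} {b d : β} (p : G.Walk a c) (q : H.Walk b d),
    (combineWalk p q).length = max p.length q.length
  | _, _, _, _, .nil, .nil => by simp [combineWalk]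
  | a, _, b, d, .nil, @SimpleGraph.Walk.cons _ _ _ b' _ h q => by
      have := combineWalk_length (Walk.nil (u := a)) q
      simp only [combineWalk, Walk.length_cons, Walk.length_nil] at this ⊢
      change (combineWalk Walk.nil q).length + 1 = _
      omega
  | a, c, b, _, @SimpleGraph.Walk.cons _ _ _ a' _ h p, .nil => by
      have := combineWalk_length p (Walk.nil (u := b))
      simp only [combineWalk, Walk.length_cons, Walk.length_nil] at this ⊢
      change (combineWalk p Walk.nil).length + 1 = _
      omega
  | a, c, b, d, @SimpleGraph.Walk.cons _ _ _ a' _ h p,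
      @SimpleGraph.Walk.cons _ _ _ b' _ h' q => by
      have := combineWalk_length p q
      simp only [combineWalk, Walk.length_cons] at this ⊢
      change (combineWalk p q).length + 1 = _
      omega

lemma strongProd_connected (hG : G.Connected) (hH : H.Connected) :
    (strongProd G H).Connected := by
  rw [SimpleGraph.connected_iff_exists_forall_reachable]
  obtain ⟨a⟩ := hG.nonempty
  obtain ⟨b⟩ := hH.nonempty
  refine ⟨(a, b), fun v => ?_⟩
  obtain ⟨p⟩ := hG a v.1
  obtain ⟨q⟩ := hH b v.2
  exact ⟨combineWalk p q⟩

lemma fst_dist_le_walk_length (hG : G.Connected) :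
    ∀ {x y : α × β} (p : (strongProd G H).Walk x y), G.dist x.1 y.1 ≤ p.length
  | _, _, .nil => by simp [SimpleGraph.dist_self]
  | x, y, @SimpleGraph.Walk.cons _ _ _ z _ h p => by
      have ih := fst_dist_le_walk_length hG p
      rcases h.2.1 with he | ha
      · rw [Walk.length_cons, he]; omega
      · have h1 : G.dist x.1 y.1 ≤ G.dist x.1 z.1 + G.dist z.1 y.1 := hG.dist_triangle
        have h2 : G.dist x.1 z.1 ≤ 1 := by
          have := SimpleGraph.dist_le (Walk.cons ha Walk.nil); simpa using this
        rw [Walk.length_cons]; omega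

lemma snd_dist_le_walk_length (hH : H.Connected) :
    ∀ {x y : α × β} (p : (strongProd G H).Walk x y), H.dist x.2 y.2 ≤ p.length
  | _, _, .nil => by simp [SimpleGraph.dist_self]
  | x, y, @SimpleGraph.Walk.cons _ _ _ z _ h p => by
      have ih := snd_dist_le_walk_length hH p
      rcases h.2.2 with he | ha
      · rw [Walk.length_cons, he]; omega
      · have h1 : H.dist x.2 y.2 ≤ H.dist x.2 z.2 + H.dist z.2 y.2 := hH.dist_triangle
        have h2 : H.dist x.2 z.2 ≤ 1 := by
          have := SimpleGraph.dist_le (Walk.cons ha Walk.nil); simpa using this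
        rw [Walk.length_cons]; omega

lemma strongProd_dist (hG : G.Connected) (hH : H.Connected) (a c : α) (b d : β) :
    (strongProd G H).dist (a, b) (c, d) = max (G.dist a c) (H.dist b d) := by
  apply le_antisymm
  · obtain ⟨p, hp⟩ := hG.exists_walk_length_eq_dist a c
    obtain ⟨q, hq⟩ := hH.exists_walk_length_eq_dist b d
    have := SimpleGraph.dist_le (combineWalk p q)
    rwa [combineWalk_length, hp, hq] at this
  · obtain ⟨P, hP⟩ := (strongProd_connected hG hH).exists_walk_length_eq_dist (a, b) (c, d)
    have h1 := fst_dist_le_walk_length (H := H) hG P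
    have h2 := snd_dist_le_walk_length (G := G) hH P
    rw [hP] at h1 h2
    exact max_le h1 h2

lemma exists_min_generator (G : SimpleGraph α) [Fintype α] :
    ∃ s : Finset α, IsStrongMetricGenerator G s ∧ s.card = sdim G := by
  have hne : {n | ∃ s : Finset α, IsStrongMetricGenerator G s ∧ s.card = n}.Nonempty := by
    refine ⟨(Finset.univ : Finset α).card, Finset.univ, fun u v huv => ?_, rfl⟩
    exact ⟨u, Finset.mem_univ u, Or.inr (by simp [SimpleGraph.dist_self])⟩
  exact Nat.sInf_mem hne

end Aux

theorem sdim_strongProd_upper_bound [Fintype α] [Fintype β]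
    (G : SimpleGraph α) (H : SimpleGraph β)
    (hG : G.Connected) (hGn : Nontrivial α) (hH : H.Connected) (hHn : Nontrivial β) :
    sdim (strongProd G H) ≤
      Fintype.card β * sdim G + Fintype.card α * sdim H - sdim G * sdim H := by
  classical
  obtain ⟨W₁, hW₁g, hW₁c⟩ := exists_min_generator G
  obtain ⟨W₂, hW₂g, hW₂c⟩ := exists_min_generator H
  set S : Finset (α × β) := (W₁ ×ˢ Finset.univ) ∪ (Finset.univ ×ˢ W₂) with hS
  have hgen : IsStrongMetricGenerator (strongProd G H) S := by
    rintro ⟨a, b⟩ ⟨c, d⟩ hne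
    by_cases hcase : H.dist b d ≤ G.dist a c
    · have hac : a ≠ c := by
        rintro rfl
        have h0 : G.dist a a = 0 := SimpleGraph.dist_self
        have : H.dist b d = 0 := by omega
        exact hne (by rw [(hH.dist_eq_zero_iff).mp this])
      obtain ⟨w₁, hw₁, hres⟩ := hW₁g a c hac
      rcases hres with hres | hres
      · refine ⟨(w₁, d), ?_, ?_⟩
        · exact Finset.mem_union_left _ (Finset.mem_product.mpr ⟨hw₁, Finset.mem_univ _⟩)
        · left
          rw [strongProd_dist hG hH, strongProd_dist hG hH, strongProd_dist hG hH]
          have e0 : H.dist d b = H.dist b d := SimpleGraph.dist_comm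
          have e1 : G.dist c a = G.dist a c := SimpleGraph.dist_comm
          have e2 : H.dist d b ≤ G.dist c a := by omega
          have e3 : H.dist d b ≤ G.dist w₁ a := by omega
          have e4 : H.dist d d = 0 := SimpleGraph.dist_self
          rw [max_eq_left e3, e4, Nat.max_zero, max_eq_left e2]
          exact hres
      · refine ⟨(w₁, b), ?_, ?_⟩
        · exact Finset.mem_union_left _ (Finset.mem_product.mpr ⟨hw₁, Finset.mem_univ _⟩)
        · right
          rw [strongProd_dist hG hH, strongProd_dist hG hH, strongProd_dist hG hH]
          have e1 : H.dist b d ≤ G.dist w₁ c := by omega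
          have e4 : H.dist b b = 0 := SimpleGraph.dist_self
          rw [max_eq_left e1, e4, Nat.max_zero, max_eq_left hcase]
          exact hres
    · push_neg at hcase
      have hbd : b ≠ d := by
        rintro rfl
        have h0 : H.dist b b = 0 := SimpleGraph.dist_self
        omega
      obtain ⟨w₂, hw₂, hres⟩ := hW₂g b d hbd
      rcases hres with hres | hres
      · refine ⟨(c, w₂), ?_, ?_⟩
        · exact Finset.mem_union_right _ (Finset.mem_product.mpr ⟨Finset.mem_univ _, hw₂⟩)
        · left
          rw [strongProd_dist hG hH, strongProd_dist hG hH, strongProd_dist hG hH]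
          have e0 : G.dist c a = G.dist a c := SimpleGraph.dist_comm
          have e0' : H.dist d b = H.dist b d := SimpleGraph.dist_comm
          have e2 : G.dist c a ≤ H.dist d b := by omega
          have e3 : G.dist c a ≤ H.dist w₂ b := by omega
          have e4 : G.dist c c = 0 := SimpleGraph.dist_self
          rw [max_eq_right e3, e4, Nat.zero_max, max_eq_right e2]
          exact hres
      · refine ⟨(a, w₂), ?_, ?_⟩
        · exact Finset.mem_union_right _ (Finset.mem_product.mpr ⟨Finset.mem_univ _, hw₂⟩)
        · right
          rw [strongProd_dist hG hH, strongProd_dist hG hH, strongProd_dist hG hH]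
          have e1 : G.dist a c ≤ H.dist w₂ d := by omega
          have e4 : G.dist a a = 0 := SimpleGraph.dist_self
          rw [max_eq_right e1, e4, Nat.zero_max, max_eq_right (le_of_lt hcase)]
          exact hres
  have hinter : (W₁ ×ˢ (Finset.univ : Finset β)) ∩ ((Finset.univ : Finset α) ×ˢ W₂)
      = W₁ ×ˢ W₂ := by
    ext ⟨x, y⟩
    simp [Finset.mem_product]
  have hthis := Finset.card_union_add_card_inter (W₁ ×ˢ (Finset.univ : Finset β))
      ((Finset.univ : Finset α) ×ˢ W₂)
  rw [hinter] at hthis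
  simp only [Finset.card_product, Finset.card_univ] at hthis
  have hle : sdim (strongProd G H) ≤ S.card := Nat.sInf_le ⟨S, hgen, rfl⟩
  rw [← hW₁c, ← hW₂c, mul_comm (Fintype.card β)]
  rw [hS] at hle
  omega
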